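/- Let k be a field and n ≥ 1, and let F_n be the universal monic polynomial of degree n. If P ∈ k[Y₁,…,Yₙ] is invariant under every permutation of the variables Y₁,…,Yₙ and lies in the k-subalgebra of k[Y₁,…,Yₙ] generated by the differences Yᵢ − Yⱼ (1 ≤ i, j ≤ n), then P, regarded as a constant (in X) element of k[Y₁,…,Yₙ][X], belongs to the k-subalgebra of k[Y₁,…,Yₙ][X] generated by the Hasse derivatives Δ^k F_n for 0 ≤ k ≤ n−1. -/
import Mathlib

open Polynomial in
private lemma hasseDeriv_map_aux {R : Type*} [CommRing R] (p : R[X]) (m : ℕ) :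
    Polynomial.hasseDeriv m (p.map (Polynomial.C : R →+* R[X])) =
      (Polynomial.hasseDeriv m p).map (Polynomial.C : R →+* R[X]) := by
  ext n
  simp [Polynomial.hasseDeriv_coeff, Polynomial.coeff_map]

open Polynomial in
/-- Vieta-type formula for Hasse derivatives of `∏ (X - C rᵢ)`. -/
private lemma hasseDeriv_prod_X_sub_C {R : Type*} [CommRing R] {n : ℕ} (r : Fin n → R)
    (j : ℕ) (hj : j ≤ n) :
    Polynomial.hasseDeriv j (∏ i : Fin n, (X - C (r i))) =
      ∑ t ∈ Finset.powersetCard (n - j) (Finset.univ : Finset (Fin n)),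
        ∏ i ∈ t, (X - C (r i)) := by
  have h1 : (Polynomial.taylor (X : R[X])
        ((∏ i : Fin n, (X - C (r i))).map (Polynomial.C : R →+* R[X]))).coeff j
      = Polynomial.hasseDeriv j (∏ i : Fin n, (X - C (r i))) := by
    rw [Polynomial.taylor_coeff, hasseDeriv_map_aux, Polynomial.eval_map,
      Polynomial.eval₂_C_X]
  rw [← h1, Polynomial.taylor_apply, Polynomial.map_prod]
  simp only [Polynomial.map_sub, Polynomial.map_X, Polynomial.map_C]
  rw [Polynomial.prod_comp]
  simp only [Polynomial.sub_comp, Polynomial.X_comp, Polynomial.C_comp]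
  have h2 : ∀ i : Fin n, (X : (R[X])[X]) + C (X : R[X]) - C (C (r i))
      = X + C ((X : R[X]) - C (r i)) := by
    intro i; rw [map_sub]; ring
  simp_rw [h2]
  rw [Finset.prod_X_add_C_coeff _ _ (by simpa using hj)]
  simp

/-- Let `k` be a field, `n ≥ 1`, and let `Fₙ = ∏ᵢ (X − Yᵢ)` be the universal
monic polynomial of degree `n`.  If `P ∈ k[Y₁,…,Yₙ]` is symmetric and lies in the
`k`-subalgebra generated by the differences `Yᵢ − Yⱼ`, then `P`, regarded as a constant (in
`X`) element of `k[Y₁,…,Yₙ][X]`, belongs to the `k`-subalgebra of `k[Y₁,…,Yₙ][X]` generated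
by the Hasse derivatives `Δ^j Fₙ` for `0 ≤ j ≤ n − 1`. -/
theorem symmetric_diff_invariant_mem_adjoin_hasseDeriv {k : Type*} [Field k]
    (n : ℕ) (hn : 1 ≤ n) (P : MvPolynomial (Fin n) k) (hsym : P.IsSymmetric)
    (hdiff : P ∈ Algebra.adjoin k
      {q : MvPolynomial (Fin n) k | ∃ i j : Fin n, q = MvPolynomial.X i - MvPolynomial.X j}) :
    (Polynomial.C P : Polynomial (MvPolynomial (Fin n) k)) ∈
      Algebra.adjoin k
        {q : Polynomial (MvPolynomial (Fin n) k) | ∃ j, j < n ∧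
          q = Polynomial.hasseDeriv j
                (∏ i : Fin n, (Polynomial.X - Polynomial.C (MvPolynomial.X i)))} := by
  classical
  set F : Polynomial (MvPolynomial (Fin n) k) := ∏ i : Fin n, (Polynomial.X - Polynomial.C (MvPolynomial.X i)) with hF
  set A : Subalgebra k (Polynomial (MvPolynomial (Fin n) k)) :=
    Algebra.adjoin k
      {q : Polynomial (MvPolynomial (Fin n) k) | ∃ j, j < n ∧ q = Polynomial.hasseDeriv j F} with hA
  -- The substitution `Yᵢ ↦ C Yᵢ - X`.
  set Φ : MvPolynomial (Fin n) k →ₐ[k] Polynomial (MvPolynomial (Fin n) k) :=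
    MvPolynomial.aeval (fun i : Fin n => Polynomial.C (MvPolynomial.X i) - Polynomial.X) with hΦ
  -- Step 1: Φ acts as `Polynomial.C` on the difference algebra.
  have hΦP : Φ P = Polynomial.C P := by
    refine Algebra.adjoin_induction (p := fun x _ => Φ x = Polynomial.C x) ?_ ?_ ?_ ?_ hdiff
    · rintro q ⟨i, j, rfl⟩
      rw [hΦ]
      simp only [map_sub, MvPolynomial.aeval_X]
      ring
    · intro r
      rw [AlgHom.commutes, Polynomial.algebraMap_apply]
    · intro x y _ _ hx hy
      rw [map_add, map_add, hx, hy]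
    · intro x y _ _ hx hy
      rw [map_mul, map_mul, hx, hy]
  -- Step 2: images of the elementary symmetric polynomials under Φ lie in A.
  have hesymm : ∀ m : ℕ, 1 ≤ m → m ≤ n →
      Φ (MvPolynomial.esymm (Fin n) k m) ∈ A := by
    intro m hm1 hmn
    have hexp : Φ (MvPolynomial.esymm (Fin n) k m) =
        (-1 : Polynomial (MvPolynomial (Fin n) k)) ^ m * Polynomial.hasseDeriv (n - m) F := by
      rw [hF, hasseDeriv_prod_X_sub_C _ _ (Nat.sub_le n m),
        Nat.sub_sub_self hmn]
      rw [hΦ, MvPolynomial.esymm, map_sum, Finset.mul_sum]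
      refine Finset.sum_congr rfl fun t ht => ?_
      rw [map_prod]
      simp only [MvPolynomial.aeval_X]
      have hcard : t.card = m := (Finset.mem_powersetCard.mp ht).2
      calc ∏ i ∈ t, (Polynomial.C (MvPolynomial.X i) - Polynomial.X)
          = ∏ i ∈ t, ((-1 : Polynomial (MvPolynomial (Fin n) k)) *
              (Polynomial.X - Polynomial.C (MvPolynomial.X i))) := by
            refine Finset.prod_congr rfl fun i _ => ?_; ring
        _ = (-1 : Polynomial (MvPolynomial (Fin n) k)) ^ m *
              ∏ i ∈ t, (Polynomial.X - Polynomial.C (MvPolynomial.X i)) := by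
            rw [Finset.prod_mul_distrib, Finset.prod_const, hcard]
    rw [hexp]
    have hgen : Polynomial.hasseDeriv (n - m) F ∈ A :=
      Algebra.subset_adjoin ⟨n - m, by omega, rfl⟩
    exact A.mul_mem (A.pow_mem (A.neg_mem A.one_mem) m) hgen
  -- Step 3: write P as a polynomial in the elementary symmetric polynomials.
  obtain ⟨Q, hQ⟩ := MvPolynomial.esymmAlgHom_surjective (σ := Fin n) (R := k) (n := n)
    (by simp) ⟨P, (MvPolynomial.mem_symmetricSubalgebra P).mpr hsym⟩
  have hPQ : MvPolynomial.aeval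
      (fun i : Fin n => MvPolynomial.esymm (Fin n) k ((i : ℕ) + 1)) Q = P := by
    have := congrArg Subtype.val hQ
    rwa [MvPolynomial.esymmAlgHom_apply] at this
  -- Conclusion.
  rw [← hΦP, ← hPQ, MvPolynomial.comp_aeval_apply]
  set g : Fin n → Polynomial (MvPolynomial (Fin n) k) :=
    fun i => Φ (MvPolynomial.esymm (Fin n) k ((i : ℕ) + 1)) with hg
  have hrange : Set.range g ⊆ (A : Set (Polynomial (MvPolynomial (Fin n) k))) := by
    rintro _ ⟨i, rfl⟩
    exact hesymm ((i : ℕ) + 1) (Nat.le_add_left 1 i) (by omega)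
  have hmem : MvPolynomial.aeval g Q ∈ Algebra.adjoin k (Set.range g) := by
    rw [Algebra.adjoin_range_eq_range_aeval]
    exact ⟨Q, rfl⟩
  exact Algebra.adjoin_le hrange hmem
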